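/- Let v be a variety, v* its mirror variety, and w any variety with w ≠ v and w ≠ v*. Then the multiset consisting of seven cubes of variety v, seven cubes of variety v*, and one cube of variety w contains eight cubes forming a corner solution modeled on v or modeled on v*. -/

import Mathlib

open scoped Classical

/-- A colored cube: a bijection assigning to each face (`Fin 6`) a color (`Fin 6`). -/
abbrev CCube := Equiv.Perm (Fin 6)

/-- The opposite-face involution: face `i` is opposite face `i + 3`. -/
def tau (i : Fin 6) : Fin 6 := i + 3

/-- Quarter-turn rotation about the axis through the face pair `{2, 5}`. -/
def r1 : Equiv.Perm (Fin 6) := ([0, 1, 3, 4] : List (Fin 6)).formPerm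

/-- Quarter-turn rotation about the axis through the face pair `{0, 3}`. -/
def r2 : Equiv.Perm (Fin 6) := ([1, 2, 4, 5] : List (Fin 6)).formPerm

/-- The rotation group of the cube, acting on the set of faces. -/
def G : Subgroup (Equiv.Perm (Fin 6)) := Subgroup.closure {r1, r2}

/-- Two colored cubes have the same variety iff one is obtained from the other by
precomposition with a rotation. -/
def sameVariety (c d : CCube) : Prop := ∃ g ∈ G, d = c * g

def varietySetoid : Setoid CCube where
  r := sameVariety
  iseqv := by
    refine ⟨fun c => ⟨1, G.one_mem, (mul_one c).symm⟩, ?_, ?_⟩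
    · rintro c d ⟨g, hg, rfl⟩
      exact ⟨g⁻¹, G.inv_mem hg, by group⟩
    · rintro a b c ⟨g, hg, rfl⟩ ⟨h, hh, rfl⟩
      exact ⟨g * h, G.mul_mem hg hh, by group⟩

/-- A variety is a `G`-orbit of colored cubes. -/
def Variety := Quotient varietySetoid

/-- The variety of a colored cube. -/
def varietyOf (c : CCube) : Variety := Quotient.mk varietySetoid c

/-- The three opposite pairs of colors of a colored cube. -/
def oppPairs (c : CCube) : Finset (Finset (Fin 6)) :=
  Finset.image (fun i => ({c i, c (tau i)} : Finset (Fin 6))) Finset.univ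

/-- The twelve adjacent pairs of colors of a colored cube. -/
def adjPairs (c : CCube) : Finset (Finset (Fin 6)) :=
  Finset.image (fun p : Fin 6 × Fin 6 => ({c p.1, c p.2} : Finset (Fin 6)))
    (Finset.univ.filter (fun p : Fin 6 × Fin 6 => p.2 ≠ p.1 ∧ p.2 ≠ tau p.1))

/-- The mirror cube of `c`. -/
def mirror (c : CCube) : CCube := c * Equiv.swap 0 3

/-- Cyclic rotation of an ordered triple. -/
def cyc (t : Fin 6 × Fin 6 × Fin 6) : Fin 6 × Fin 6 × Fin 6 := (t.2.1, t.2.2, t.1)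

/-- The cyclic equivalence class of an ordered triple. -/
def cycClass (t : Fin 6 × Fin 6 × Fin 6) : Finset (Fin 6 × Fin 6 × Fin 6) :=
  {t, cyc t, cyc (cyc t)}

/-- The eight corner triples of a colored cube: faces `0, 1, 2` meet at a corner, read
clockwise, and the corners of the cube are the images of this corner under rotations. -/
noncomputable def cornerTriples (c : CCube) : Finset (Finset (Fin 6 × Fin 6 × Fin 6)) :=
  Finset.univ.filter (fun s => ∃ g ∈ G, s = cycClass (c (g 0), c (g 1), c (g 2)))

/-- The opposite pairs of a variety. -/
noncomputable def vOpp (v : Variety) : Finset (Finset (Fin 6)) := oppPairs (Quotient.out v)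

/-- The adjacent pairs of a variety. -/
noncomputable def vAdj (v : Variety) : Finset (Finset (Fin 6)) := adjPairs (Quotient.out v)

/-- The corner triples of a variety. -/
noncomputable def vCorners (v : Variety) : Finset (Finset (Fin 6 × Fin 6 × Fin 6)) :=
  cornerTriples (Quotient.out v)

/-- The mirror variety of a variety. -/
noncomputable def vMirror (v : Variety) : Variety := varietyOf (mirror (Quotient.out v))

/-- A pentad: five varieties which pairwise share no corner triples and whose fifteen
opposite pairs comprise each unordered pair of colors exactly once. -/
def IsPentad (P : Finset Variety) : Prop :=
  P.card = 5 ∧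
  (∀ v ∈ P, ∀ w ∈ P, v ≠ w → vCorners v ∩ vCorners w = ∅) ∧
  (∀ p : Finset (Fin 6), p.card = 2 → ∃! v, v ∈ P ∧ p ∈ vOpp v)

/-- A corner solution from the multiset `S` modeled on the cube `m`: eight distinct cube
instances from `S` in bijection with the eight corner triples of `m`, each chosen cube having
its assigned corner triple among its own corner triples. -/
def CornerSolutionOn (S : Multiset CCube) (m : CCube) : Prop :=
  ∃ ψ : Finset (Fin 6 × Fin 6 × Fin 6) → CCube,
    Multiset.map ψ (cornerTriples m).val ≤ S ∧
    ∀ t ∈ cornerTriples m, t ∈ cornerTriples (ψ t)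

/-- `S` contains a corner solution modeled on some variety. -/
def HasCornerSolution (S : Multiset CCube) : Prop := ∃ m : CCube, CornerSolutionOn S m

/-- An `n`-frame solution from `S` modeled on the cube `m`: a corner solution together with,
for each of the twelve adjacent pairs of `m`, a further `n - 2` cube instances having that
adjacent pair, all `12n - 16` cube instances distinct. -/
def FrameSolutionOn (n : ℕ) (S : Multiset CCube) (m : CCube) : Prop :=
  ∃ (ψ : Finset (Fin 6 × Fin 6 × Fin 6) → CCube) (f : Finset (Fin 6) → Multiset CCube),
    (∀ t ∈ cornerTriples m, t ∈ cornerTriples (ψ t)) ∧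
    (∀ p ∈ adjPairs m, Multiset.card (f p) = n - 2 ∧ ∀ x ∈ f p, p ∈ adjPairs x) ∧
    Multiset.map ψ (cornerTriples m).val + (adjPairs m).sum f ≤ S

/-- `S` contains an `n`-frame solution modeled on some variety. -/
def HasFrameSolution (n : ℕ) (S : Multiset CCube) : Prop := ∃ m : CCube, FrameSolutionOn n S m

/-! ### Auxiliary machinery for `two_sevens` -/

namespace TwoSevensAux

/-- Generators indexed by booleans. -/
def genB : Bool → CCube := fun b => if b then r1 else r2

/-- Words in the generators spelling out the 24 rotations. -/
def wordsL : List (List Bool) :=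
  [[], [true], [false], [true, true], [true, false], [false, true], [false, false],
   [true, true, true], [true, true, false], [true, false, true], [true, false, false],
   [false, true, true], [false, false, true], [false, false, false],
   [true, true, true, false], [true, true, false, true], [true, true, false, false],
   [true, false, true, true], [true, false, false, false], [false, true, true, true],
   [false, false, false, true], [true, true, true, false, true],
   [true, false, true, true, true], [true, false, false, false, true]]

/-- The 24 rotations as products of generators. -/
def L : List CCube := wordsL.map (fun w => (w.map genB).prod)

/-- The 24 ordered corner face-triples (images of `(0,1,2)` under the rotations). -/
def T24 : List (Fin 6 × Fin 6 × Fin 6) :=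
  [(0, 1, 2), (1, 3, 2), (0, 2, 4), (3, 4, 2), (1, 2, 0), (2, 3, 4), (0, 4, 5), (4, 0, 2),
   (3, 2, 1), (2, 4, 0), (1, 0, 5), (3, 5, 4), (4, 3, 5), (0, 5, 1), (4, 2, 3), (2, 0, 1),
   (3, 1, 5), (4, 5, 0), (1, 5, 3), (5, 0, 4), (5, 3, 1), (2, 1, 3), (5, 1, 0), (5, 4, 3)]

/-- The mirrored corner triples. -/
def M24 : List (Fin 6 × Fin 6 × Fin 6) :=
  [(3, 1, 2), (1, 0, 2), (3, 2, 4), (0, 4, 2), (1, 2, 3), (2, 0, 4), (3, 4, 5), (4, 3, 2),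
   (0, 2, 1), (2, 4, 3), (1, 3, 5), (0, 5, 4), (4, 0, 5), (3, 5, 1), (4, 2, 0), (2, 3, 1),
   (0, 1, 5), (4, 5, 3), (1, 5, 0), (5, 3, 4), (5, 0, 1), (2, 1, 0), (5, 1, 3), (5, 4, 0)]

/-- Cyclic representatives of the eight corners. -/
def T8 : List (Fin 6 × Fin 6 × Fin 6) :=
  [(0, 1, 2), (1, 3, 2), (0, 2, 4), (3, 4, 2), (0, 4, 5), (1, 0, 5), (3, 5, 4), (3, 1, 5)]

/-- Triples of faces. -/
abbrev T3 := Fin 6 × Fin 6 × Fin 6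

/-- Six-tuples of faces. -/
abbrev T6 := T3 × T3

/-- The 24 rotations as explicit tuples of values. -/
def L6v : Fin 24 → T6 :=
  ![((0, 1, 2), (3, 4, 5)), ((1, 3, 2), (4, 0, 5)), ((0, 2, 4), (3, 5, 1)),
    ((3, 4, 2), (0, 1, 5)), ((1, 2, 0), (4, 5, 3)), ((2, 3, 4), (5, 0, 1)),
    ((0, 4, 5), (3, 1, 2)), ((4, 0, 2), (1, 3, 5)), ((3, 2, 1), (0, 5, 4)),
    ((2, 4, 0), (5, 1, 3)), ((1, 0, 5), (4, 3, 2)), ((3, 5, 4), (0, 2, 1)),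
    ((4, 3, 5), (1, 0, 2)), ((0, 5, 1), (3, 2, 4)), ((4, 2, 3), (1, 5, 0)),
    ((2, 0, 1), (5, 3, 4)), ((3, 1, 5), (0, 4, 2)), ((4, 5, 0), (1, 2, 3)),
    ((1, 5, 3), (4, 2, 0)), ((5, 0, 4), (2, 3, 1)), ((5, 3, 1), (2, 0, 4)),
    ((2, 1, 3), (5, 4, 0)), ((5, 1, 0), (2, 4, 3)), ((5, 4, 3), (2, 1, 0))]

/-- The function determined by a tuple. -/
def toVec (u : T6) : Fin 6 → Fin 6 :=
  ![u.1.1, u.1.2.1, u.1.2.2, u.2.1, u.2.2.1, u.2.2.2]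

/-- The tuple of a function. -/
def tupVec (f : Fin 6 → Fin 6) : T6 := ((f 0, f 1, f 2), (f 3, f 4, f 5))

/-- The tuple of values of a permutation. -/
def tupOf (g : CCube) : T6 := ((g 0, g 1, g 2), (g 3, g 4, g 5))

/-- Composition of tuples. -/
def compT (u v : T6) : T6 := tupVec (toVec u ∘ toVec v)

/-- The identity tuple. -/
def idT : T6 := ((0, 1, 2), (3, 4, 5))

lemma toVec_tupVec (f : Fin 6 → Fin 6) (i : Fin 6) : toVec (tupVec f) i = f i := by
  fin_cases i <;> rfl

lemma toVec_tupOf (g : CCube) (i : Fin 6) : toVec (tupOf g) i = g i := by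
  fin_cases i <;> rfl

lemma toVec_idT (i : Fin 6) : toVec idT i = i := by
  fin_cases i <;> rfl

lemma tupOf_mul (x y : CCube) : tupOf (x * y) = compT (tupOf x) (tupOf y) := by
  simp only [compT, tupVec, Function.comp_apply, toVec_tupOf]
  rfl

set_option maxRecDepth 10000 in
lemma hL6mul : ∀ i j : Fin 24, ∃ k : Fin 24, compT (L6v i) (L6v j) = L6v k := by decide

set_option maxRecDepth 10000 in
lemma hL6inv : ∀ i : Fin 24, ∃ j : Fin 24, compT (L6v i) (L6v j) = idT := by decide

set_option maxRecDepth 10000 in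
lemma hL6r1 : ∃ i : Fin 24, tupOf r1 = L6v i := by decide

set_option maxRecDepth 10000 in
lemma hL6r2 : ∃ i : Fin 24, tupOf r2 = L6v i := by decide

set_option maxRecDepth 10000 in
lemma hL6one : ∃ i : Fin 24, tupOf 1 = L6v i := by decide

lemma tup_inv {x : CCube} {v : T6} (h : compT (tupOf x) v = idT) : tupOf x⁻¹ = v := by
  have happ : ∀ i, x (toVec v i) = i := by
    intro i
    have h1 : toVec (compT (tupOf x) v) i = toVec idT i := by rw [h]
    rw [show toVec (compT (tupOf x) v) i = toVec (tupOf x) (toVec v i) from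
      toVec_tupVec _ i, toVec_tupOf, toVec_idT] at h1
    exact h1
  have hvi : ∀ i, toVec v i = x⁻¹ i := by
    intro i
    have h2 := congrArg (fun z => x⁻¹ z) (happ i)
    simp only [show ∀ y, x⁻¹ (x y) = y from x.symm_apply_apply] at h2
    exact h2
  have h3 : tupOf x⁻¹ =
      ((toVec v 0, toVec v 1, toVec v 2), (toVec v 3, toVec v 4, toVec v 5)) := by
    simp only [tupOf, hvi]
  rw [h3]
  rfl

lemma mem_L6_of_mem_G {g : CCube} (hg : g ∈ G) : ∃ i : Fin 24, tupOf g = L6v i := by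
  induction hg using Subgroup.closure_induction with
  | mem x hx =>
    rcases hx with h | h
    · rw [h]; exact hL6r1
    · rw [h]; exact hL6r2
  | one => exact hL6one
  | mul x y hx hy ihx ihy =>
    obtain ⟨i, hi⟩ := ihx
    obtain ⟨j, hj⟩ := ihy
    rw [tupOf_mul, hi, hj]
    exact hL6mul i j
  | inv x hx ih =>
    obtain ⟨i, hi⟩ := ih
    obtain ⟨j, hj⟩ := hL6inv i
    rw [← hi] at hj
    exact ⟨j, tup_inv hj⟩

set_option maxRecDepth 10000 in
lemma hL6T : ∀ i : Fin 24, (((L6v i).1.1, (L6v i).1.2.1, (L6v i).1.2.2) : T3) ∈ T24 := by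
  decide

lemma triple_mem_T24 {g : CCube} (hg : g ∈ G) :
    ((g 0, g 1, g 2) : Fin 6 × Fin 6 × Fin 6) ∈ T24 := by
  obtain ⟨i, hi⟩ := mem_L6_of_mem_G hg
  have h1 : g 0 = (L6v i).1.1 := by rw [← hi]; rfl
  have h2 : g 1 = (L6v i).1.2.1 := by rw [← hi]; rfl
  have h3 : g 2 = (L6v i).1.2.2 := by rw [← hi]; rfl
  rw [h1, h2, h3]
  exact hL6T i

lemma hLG : ∀ g ∈ L, g ∈ G := by
  intro g hg
  simp only [L, List.mem_map] at hg
  obtain ⟨w, -, rfl⟩ := hg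
  refine list_prod_mem ?_
  intro x hx
  simp only [List.mem_map] at hx
  obtain ⟨b, -, rfl⟩ := hx
  cases b
  · exact Subgroup.subset_closure (Set.mem_insert_of_mem _ rfl)
  · exact Subgroup.subset_closure (Set.mem_insert _ _)

set_option maxRecDepth 10000 in
lemma hcov : ∀ t ∈ T24, ∃ g ∈ L, g 0 = t.1 ∧ g 1 = t.2.1 ∧ g 2 = t.2.2 := by decide

set_option maxRecDepth 10000 in
lemma hM24 : ∀ t ∈ M24, ∃ u ∈ T24,
    Equiv.swap (0 : Fin 6) 3 u.1 = t.1 ∧ Equiv.swap (0 : Fin 6) 3 u.2.1 = t.2.1 ∧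
      Equiv.swap (0 : Fin 6) 3 u.2.2 = t.2.2 := by decide

lemma mem_cornerTriples (x : CCube) {t : Fin 6 × Fin 6 × Fin 6} (ht : t ∈ T24) :
    cycClass (x t.1, x t.2.1, x t.2.2) ∈ cornerTriples x := by
  obtain ⟨g, hgL, h0, h1, h2⟩ := hcov t ht
  simp only [cornerTriples, Finset.mem_filter, Finset.mem_univ, true_and]
  exact ⟨g, hLG g hgL, by rw [h0, h1, h2]⟩

lemma cycClass_cyc (t : Fin 6 × Fin 6 × Fin 6) : cycClass (cyc t) = cycClass t := by
  have h3 : cyc (cyc (cyc t)) = t := rfl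
  simp only [cycClass, h3]
  ext s
  simp only [Finset.mem_insert, Finset.mem_singleton]
  tauto

lemma F_eq (x : CCube) {a b : Fin 6 × Fin 6 × Fin 6}
    (h : a = b ∨ a = cyc b ∨ a = cyc (cyc b)) :
    cycClass (x a.1, x a.2.1, x a.2.2) = cycClass (x b.1, x b.2.1, x b.2.2) := by
  rcases h with rfl | rfl | rfl
  · rfl
  · exact cycClass_cyc (x b.1, x b.2.1, x b.2.2)
  · rw [show ((x (cyc (cyc b)).1, x (cyc (cyc b)).2.1, x (cyc (cyc b)).2.2) :
        Fin 6 × Fin 6 × Fin 6) = cyc (cyc (x b.1, x b.2.1, x b.2.2)) from rfl,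
      cycClass_cyc, cycClass_cyc]

set_option maxRecDepth 10000 in
lemma hT8 : ∀ t ∈ T24, ∃ t' ∈ T8, t = t' ∨ t = cyc t' ∨ t = cyc (cyc t') := by decide

lemma card_cornerTriples_le (x : CCube) : (cornerTriples x).card ≤ 8 := by
  classical
  have hsub : cornerTriples x ⊆
      (T8.map (fun t => cycClass (x t.1, x t.2.1, x t.2.2))).toFinset := by
    intro s hs
    simp only [cornerTriples, Finset.mem_filter, Finset.mem_univ, true_and] at hs
    obtain ⟨g, hg, rfl⟩ := hs
    obtain ⟨t', ht', hcase⟩ := hT8 _ (triple_mem_T24 hg)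
    simp only [List.mem_toFinset, List.mem_map]
    exact ⟨t', ht', (F_eq x hcase).symm⟩
  calc (cornerTriples x).card
      ≤ (T8.map (fun t => cycClass (x t.1, x t.2.1, x t.2.2))).toFinset.card :=
        Finset.card_le_card hsub
    _ ≤ (T8.map (fun t => cycClass (x t.1, x t.2.1, x t.2.2))).length :=
        List.toFinset_card_le _
    _ = 8 := by rw [List.length_map]; rfl

set_option maxRecDepth 100000 in
set_option maxHeartbeats 4000000 in
lemma KEY : ∀ a0 a1 a2 a3 a4 a5 : Fin 6, List.Nodup [a0, a1, a2, a3, a4, a5] →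
    ∃ t ∈ T24, ((![a0, a1, a2, a3, a4, a5] t.1, ![a0, a1, a2, a3, a4, a5] t.2.1,
      ![a0, a1, a2, a3, a4, a5] t.2.2) : Fin 6 × Fin 6 × Fin 6) ∈ T24 ++ M24 := by
  decide

lemma key_perm (e : CCube) :
    ∃ t ∈ T24, ((e t.1, e t.2.1, e t.2.2) : Fin 6 × Fin 6 × Fin 6) ∈ T24 ++ M24 := by
  have hnd : List.Nodup [e 0, e 1, e 2, e 3, e 4, e 5] := by
    have h1 : List.Nodup [(0 : Fin 6), 1, 2, 3, 4, 5] := by decide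
    exact h1.map e.injective
  obtain ⟨t, ht, hm⟩ := KEY (e 0) (e 1) (e 2) (e 3) (e 4) (e 5) hnd
  refine ⟨t, ht, ?_⟩
  simpa only [show (![e 0, e 1, e 2, e 3, e 4, e 5] : Fin 6 → Fin 6) =
      toVec (tupOf e) from rfl, toVec_tupOf] using hm

lemma corner_solution_aux (x d : CCube) (S : Multiset CCube)
    (t0 : Finset (Fin 6 × Fin 6 × Fin 6))
    (h0 : t0 ∈ cornerTriples x) (hd : t0 ∈ cornerTriples d)
    (hS : d ::ₘ Multiset.replicate 7 x ≤ S) : CornerSolutionOn S x := by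
  classical
  refine ⟨fun t => if t = t0 then d else x, ?_, ?_⟩
  · refine le_trans ?_ hS
    have h0' : t0 ∈ (cornerTriples x).val := h0
    rw [← Multiset.cons_erase h0', Multiset.map_cons, if_pos rfl]
    refine Multiset.cons_le_cons d ?_
    have hrep : Multiset.map (fun t => if t = t0 then d else x)
        ((cornerTriples x).val.erase t0) =
        Multiset.replicate (Multiset.card ((cornerTriples x).val.erase t0)) x := by
      rw [Multiset.eq_replicate]
      refine ⟨by rw [Multiset.card_map], ?_⟩
      intro b hb
      obtain ⟨t, ht, rfl⟩ := Multiset.mem_map.mp hb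
      have htne : t ≠ t0 := by
        have : t ∈ (cornerTriples x).erase t0 := by
          rw [← Finset.erase_val] at ht; exact ht
        exact (Finset.mem_erase.mp this).1
      rw [if_neg htne]
    rw [hrep, Multiset.replicate_le_replicate, Multiset.card_erase_of_mem h0',
      Nat.pred_eq_sub_one]
    have hcard : Multiset.card (cornerTriples x).val ≤ 8 := card_cornerTriples_le x
    omega
  · intro t ht
    show t ∈ cornerTriples (if t = t0 then d else x)
    by_cases h : t = t0
    · rw [if_pos h, h]; exact hd
    · rw [if_neg h]; exact ht

end TwoSevensAux

open TwoSevensAux in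
/-- Seven cubes of a variety, seven of its mirror variety, and one cube of any other variety
contain eight cubes forming a corner solution modeled on the variety or on its mirror. -/
theorem two_sevens (c d : CCube) (h1 : ¬ sameVariety d c) (h2 : ¬ sameVariety d (mirror c)) :
    CornerSolutionOn (Multiset.replicate 7 c + Multiset.replicate 7 (mirror c) + {d}) c ∨
    CornerSolutionOn (Multiset.replicate 7 c + Multiset.replicate 7 (mirror c) + {d})
      (mirror c) := by
  classical
  set S : Multiset CCube :=
    Multiset.replicate 7 c + Multiset.replicate 7 (mirror c) + {d} with hSdef
  have hScons : S = d ::ₘ (Multiset.replicate 7 c + Multiset.replicate 7 (mirror c)) := by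
    rw [hSdef, add_comm, Multiset.singleton_add]
  have hS1 : d ::ₘ Multiset.replicate 7 c ≤ S := by
    rw [hScons]
    exact Multiset.cons_le_cons d (Multiset.le_add_right _ _)
  have hS2 : d ::ₘ Multiset.replicate 7 (mirror c) ≤ S := by
    rw [hScons]
    exact Multiset.cons_le_cons d (Multiset.le_add_left _ _)
  set e : CCube := c⁻¹ * d with he
  have hde : ∀ i, d i = c (e i) := by
    intro i
    have hce : c * e = d := by rw [he]; group
    rw [← hce]
    rfl
  obtain ⟨t, htT, hmem⟩ := key_perm e
  rw [List.mem_append] at hmem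
  rcases hmem with hm | hm
  · left
    refine corner_solution_aux c d S (cycClass (d t.1, d t.2.1, d t.2.2)) ?_
      (mem_cornerTriples d htT) hS1
    have : (cycClass (d t.1, d t.2.1, d t.2.2)) =
        cycClass (c (e t.1), c (e t.2.1), c (e t.2.2)) := by
      rw [hde t.1, hde t.2.1, hde t.2.2]
    rw [this]
    exact mem_cornerTriples c (t := (e t.1, e t.2.1, e t.2.2)) hm
  · right
    obtain ⟨u, huT, hu1, hu2, hu3⟩ := hM24 _ hm
    refine corner_solution_aux (mirror c) d S (cycClass (d t.1, d t.2.1, d t.2.2)) ?_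
      (mem_cornerTriples d htT) hS2
    have hu1' : Equiv.swap (0 : Fin 6) 3 u.1 = e t.1 := hu1
    have hu2' : Equiv.swap (0 : Fin 6) 3 u.2.1 = e t.2.1 := hu2
    have hu3' : Equiv.swap (0 : Fin 6) 3 u.2.2 = e t.2.2 := hu3
    have m1 : (mirror c) u.1 = c (e t.1) := by
      rw [← hu1']; rfl
    have m2 : (mirror c) u.2.1 = c (e t.2.1) := by
      rw [← hu2']; rfl
    have m3 : (mirror c) u.2.2 = c (e t.2.2) := by
      rw [← hu3']; rfl
    have : (cycClass (d t.1, d t.2.1, d t.2.2)) =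
        cycClass (mirror c u.1, mirror c u.2.1, mirror c u.2.2) := by
      rw [hde t.1, hde t.2.1, hde t.2.2, ← m1, ← m2, ← m3]
    rw [this]
    exact mem_cornerTriples (mirror c) huT
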